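/- Let ε be an Extended Bundle Event Structure and C a configuration of ε. Define e ≺_C e' iff (∃X ⊆ E, X ↦ e' ∧ e ∈ X) ∨ e ⇝ e', and let ⪯_C be the reflexive-transitive closure of ≺_C on C. Then ⪯_C is a partial order on C. -/

import Mathlib

/-- Enabled events of an Extended Bundle Event Structure after the sequence `σ`. -/
def een {E : Type*} (dis : E → E → Prop) (bund : Set E → E → Prop) (σ : List E) : Set E :=
  {e | e ∉ σ ∧ (∀ X, bund X e → ∃ x ∈ X, x ∈ σ) ∧ ¬ ∃ e' ∈ σ, dis e e'}

/-- `σ` is a trace w.r.t. the enabling function `en`. -/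
def IsTrace {E : Type*} (en : List E → Set E) (σ : List E) : Prop :=
  ∀ i : Fin σ.length, σ.get i ∈ en (σ.take i)

/-- The priority condition on a sequence `σ`. -/
def PrioOK {E : Type*} (en : List E → Set E) (prio : E → E → Prop) (σ : List E) : Prop :=
  ∀ i, i < σ.length → ∀ j h : Fin σ.length,
    σ.get j ≠ σ.get h → σ.get j ∈ en (σ.take i) → σ.get h ∈ en (σ.take i) →
    prio (σ.get h) (σ.get j) → (j : ℕ) < h

/-- Precedence relation of an EBES on a configuration `C`: bundle enabling or disabling. -/
def eprecC {E : Type*} (dis : E → E → Prop) (bund : Set E → E → Prop) (C : Set E)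
    (a b : E) : Prop :=
  a ∈ C ∧ b ∈ C ∧ ((∃ X, bund X b ∧ a ∈ X) ∨ dis a b)

/-- Reflexive-transitive closure of precedence on `C`. -/
def epreC {E : Type*} (dis : E → E → Prop) (bund : Set E → E → Prop) (C : Set E) :
    E → E → Prop :=
  Relation.ReflTransGen (eprecC dis bund C)

section Aux

variable {E : Type*} [DecidableEq E]

private lemma mem_take_iff_indexOf (σ : List E) (x : E) (hx : x ∈ σ) (k : ℕ) :
    x ∈ σ.take k ↔ σ.idxOf x < k := by
  constructor
  · intro h
    obtain ⟨m, hm, he⟩ := List.mem_iff_getElem.1 h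
    simp only [List.length_take, lt_min_iff] at hm
    have hgm : σ[m]'hm.2 = x := by rw [← List.getElem_take]; exact he
    have hle : σ.idxOf x ≤ m := by
      by_contra hc
      push_neg at hc
      have := List.not_of_lt_findIdx (p := (· == x)) hc
      simp [hgm] at this
    exact lt_of_le_of_lt hle hm.1
  · intro h
    have hlt : σ.idxOf x < σ.length := List.idxOf_lt_length_iff.2 hx
    have : (σ.take k)[σ.idxOf x]'(by simp [hlt, h]) = x := by
      rw [List.getElem_take]
      exact List.getElem_idxOf hlt
    exact this ▸ List.getElem_mem _

/-- If `a` is disabled by the presence of `y` (i.e. `dis a y`) and both occur in a trace,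
then `a` occurs before `y`. -/
private lemma dis_lt {dis : E → E → Prop} {bund : Set E → E → Prop} {σ : List E}
    (hT : IsTrace (een dis bund) σ) {a y : E} (ha : a ∈ σ) (hy : y ∈ σ) (hne : a ≠ y)
    (hd : dis a y) : σ.idxOf a < σ.idxOf y := by
  have hi : σ.idxOf a < σ.length := List.idxOf_lt_length_iff.2 ha
  have henA := hT ⟨σ.idxOf a, hi⟩
  rw [show σ.get ⟨σ.idxOf a, hi⟩ = a from List.idxOf_get hi] at henA
  obtain ⟨-, -, hadis⟩ := henA
  by_contra hc
  push_neg at hc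
  have hne' : σ.idxOf y ≠ σ.idxOf a := fun h =>
    hne ((List.idxOf_inj ha).1 h.symm)
  have hylt : σ.idxOf y < σ.idxOf a := lt_of_le_of_ne hc hne'
  exact hadis ⟨y, (mem_take_iff_indexOf σ y hy _).2 hylt, hd⟩

private lemma step_lt {dis : E → E → Prop} {bund : Set E → E → Prop}
    (hstab : ∀ X e, bund X e → ∀ e1 ∈ X, ∀ e2 ∈ X, e1 ≠ e2 → dis e1 e2)
    {σ : List E} (hT : IsTrace (een dis bund) σ) {a b : E} (ha : a ∈ σ) (hb : b ∈ σ)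
    (hne : a ≠ b) (h : (∃ X, bund X b ∧ a ∈ X) ∨ dis a b) :
    σ.idxOf a < σ.idxOf b := by
  rcases h with ⟨X, hX, haX⟩ | hd
  · have hj : σ.idxOf b < σ.length := List.idxOf_lt_length_iff.2 hb
    have henB := hT ⟨σ.idxOf b, hj⟩
    have hgb : σ.get ⟨σ.idxOf b, hj⟩ = b := List.idxOf_get hj
    rw [hgb] at henB
    obtain ⟨-, hbund, -⟩ := henB
    obtain ⟨x, hxX, hxt⟩ := hbund X hX
    have hxσ : x ∈ σ := List.mem_of_mem_take hxt
    have hxlt : σ.idxOf x < σ.idxOf b := (mem_take_iff_indexOf σ x hxσ _).1 hxt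
    by_cases hxa : x = a
    · exact hxa ▸ hxlt
    · have hd : dis a x := hstab X b hX a haX x hxX (fun h => hxa h.symm)
      exact lt_trans (dis_lt hT ha hxσ (fun h => hxa h.symm) hd) hxlt
  · exact dis_lt hT ha hb hne hd

end Aux

/-- the reflexive-transitive closure of the precedence relation
(bundle enabling together with disabling) on a configuration of an EBES is a
partial order on that configuration. -/
theorem ebes_precedence_partial_order {E : Type*} (dis : E → E → Prop)
    (bund : Set E → E → Prop)
    (hirr : ∀ e, ¬ dis e e)
    (hstab : ∀ X e, bund X e → ∀ e1 ∈ X, ∀ e2 ∈ X, e1 ≠ e2 → dis e1 e2)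
    (C : Set E) (hC : ∃ σ : List E, IsTrace (een dis bund) σ ∧ {e | e ∈ σ} = C) :
    (∀ e ∈ C, epreC dis bund C e e) ∧
    (∀ e1 e2 e3, epreC dis bund C e1 e2 → epreC dis bund C e2 e3 →
      epreC dis bund C e1 e3) ∧
    (∀ e ∈ C, ∀ e' ∈ C, epreC dis bund C e e' → epreC dis bund C e' e → e = e') := by
  classical
  obtain ⟨σ, hT, hCeq⟩ := hC
  have hmem : ∀ e, e ∈ C → e ∈ σ := fun e he => by rw [← hCeq] at he; exact he
  refine ⟨fun e _ => Relation.ReflTransGen.refl,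
    fun e1 e2 e3 h12 h23 => Relation.ReflTransGen.trans h12 h23, ?_⟩
  have key : ∀ a b : E, epreC dis bund C a b → σ.idxOf a ≤ σ.idxOf b := by
    intro a b h
    induction h with
    | refl => exact le_refl _
    | tail _ hstep ih =>
      rename_i c b' _
      obtain ⟨hcC, hbC, hcb⟩ := hstep
      by_cases hcb' : c = b'
      · exact hcb' ▸ ih
      · exact le_of_lt (lt_of_le_of_lt ih
          (step_lt hstab hT (hmem c hcC) (hmem b' hbC) hcb' hcb))
  intro e he e' he' h1 h2
  exact (List.idxOf_inj (hmem e he)).1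
    (le_antisymm (key e e' h1) (key e' e h2))
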